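/- Let (σ_k), (ω_k), (δ_k) be sequences of positive reals for which there exist positive constants C₋ ≤ C₊ with C₋/(k+1)³ ≤ σ_k, ω_k, δ_k ≤ C₊/(k+1)³ for all k ≥ 0, and let n > m ≥ 1 be integers. Then for every nonnegative sequence (u_k) with Σ u_k²/(k+1)³ < ∞ and every real a ≥ 0, Q(a) := a² Σ ω_k u_k² − 2a Σ δ_k u_k u_{k+n−m} + Σ σ_k u_k² ≥ (C₋ Σ u_k²/(k+1)³) · (a² − 2a C₊ (n−m+1)^{3/2}/C₋ + 1). In particular, if a² − 2a C₊ (n−m+1)^{3/2}/C₋ + 1 > 0, then Q(a) > 0 for every nonzero such (u_k). -/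

import Mathlib

private lemma stmt15_aux1 (Cp t A B dd x y : ℝ) (hx : 0 ≤ x) (hy : 0 ≤ y)
    (hA : 0 < A) (hB : 0 < B) (ht : 0 < t) (hCp0 : 0 < Cp)
    (hBA : B ≤ t ^ 2 * A) (hdd : dd ≤ Cp / A) :
    dd * x * y ≤ Cp * t / 2 * (x ^ 2 / A + y ^ 2 / B) := by
  have h1 : dd * x * y ≤ Cp / A * (x * y) := by
    have := mul_le_mul_of_nonneg_right hdd (mul_nonneg hx hy)
    linarith [this]
  have h2t : 2 * t * (x * y) * B ≤ t ^ 2 * x ^ 2 * B + t ^ 2 * y ^ 2 * A := by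
    nlinarith [mul_nonneg (sq_nonneg (t * x - y)) hB.le,
      mul_nonneg (sq_nonneg y) (sub_nonneg.2 hBA)]
  have hpoly : 2 * (x * y) * B ≤ t * x ^ 2 * B + t * y ^ 2 * A := by
    nlinarith [h2t, ht]
  have h2 : Cp / A * (x * y) ≤ Cp * t / 2 * (x ^ 2 / A + y ^ 2 / B) := by
    rw [div_mul_eq_mul_div, div_add_div _ _ hA.ne' hB.ne', ← mul_div_assoc,
      div_le_div_iff₀ hA (by positivity)]
    nlinarith [mul_le_mul_of_nonneg_left hpoly (mul_nonneg hCp0.le hA.le)]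
  linarith

private lemma stmt15_aux2 (Cm Cp t a s : ℝ) (hCm : Cm ≠ 0) :
    (Cm * s) * (a ^ 2 - 2 * a * Cp * t / Cm + 1)
      = a ^ 2 * (Cm * s) - 2 * a * (Cp * t * s) + Cm * s := by
  field_simp

/-- Lower bound for the quadratic form `Q(a)` coming from two-sided cubic-decay
bounds on the coefficient sequences, and the resulting positivity criterion. -/
theorem stmt15 (m n : ℕ) (hm : 1 ≤ m) (hmn : m < n)
    (σ ω δ : ℕ → ℝ) (Cm Cp : ℝ) (hCm : 0 < Cm) (hCp : Cm ≤ Cp)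
    (hσ : ∀ k : ℕ, Cm / ((k : ℝ) + 1) ^ 3 ≤ σ k ∧ σ k ≤ Cp / ((k : ℝ) + 1) ^ 3)
    (hω : ∀ k : ℕ, Cm / ((k : ℝ) + 1) ^ 3 ≤ ω k ∧ ω k ≤ Cp / ((k : ℝ) + 1) ^ 3)
    (hδ : ∀ k : ℕ, Cm / ((k : ℝ) + 1) ^ 3 ≤ δ k ∧ δ k ≤ Cp / ((k : ℝ) + 1) ^ 3)
    (u : ℕ → ℝ) (hu : ∀ k, 0 ≤ u k)
    (hsum : Summable (fun k : ℕ => u k ^ 2 / ((k : ℝ) + 1) ^ 3))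
    (a : ℝ) (ha : 0 ≤ a) :
    (a ^ 2 * ∑' k : ℕ, ω k * u k ^ 2
        - 2 * a * ∑' k : ℕ, δ k * u k * u (k + (n - m))
        + ∑' k : ℕ, σ k * u k ^ 2)
      ≥ (Cm * ∑' k : ℕ, u k ^ 2 / ((k : ℝ) + 1) ^ 3)
          * (a ^ 2 - 2 * a * Cp * (((n : ℝ) - m + 1) ^ ((3 : ℝ) / 2)) / Cm + 1)
    ∧ (0 < a ^ 2 - 2 * a * Cp * (((n : ℝ) - m + 1) ^ ((3 : ℝ) / 2)) / Cm + 1 →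
        (∃ k, u k ≠ 0) →
        0 < a ^ 2 * ∑' k : ℕ, ω k * u k ^ 2
            - 2 * a * ∑' k : ℕ, δ k * u k * u (k + (n - m))
            + ∑' k : ℕ, σ k * u k ^ 2) := by
  have hCp0 : 0 < Cp := hCm.trans_le hCp
  set d := n - m with hd
  set g : ℕ → ℝ := fun k => u k ^ 2 / ((k : ℝ) + 1) ^ 3 with hg
  have hgnn : ∀ k, 0 ≤ g k := fun k => by positivity
  set t : ℝ := ((n : ℝ) - m + 1) ^ ((3 : ℝ) / 2) with hT
  have hbase : (0:ℝ) < (n : ℝ) - m + 1 := by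
    have : (m:ℝ) < n := by exact_mod_cast hmn
    linarith
  have ht : 0 < t := Real.rpow_pos_of_pos hbase _
  have hcast : ((d : ℝ) + 1) = (n : ℝ) - m + 1 := by
    rw [hd]; push_cast [Nat.cast_sub hmn.le]; ring
  have ht2 : t ^ 2 = ((d : ℝ) + 1) ^ 3 := by
    rw [hT, hcast]
    rw [← Real.rpow_natCast (((n:ℝ) - m + 1) ^ ((3:ℝ)/2)) 2, ← Real.rpow_mul hbase.le]
    norm_num
  -- key pointwise bound
  have hkey : ∀ k : ℕ, δ k * u k * u (k + d) ≤ Cp * t / 2 * (g k + g (k + d)) := by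
    intro k
    have hBA : ((((k + d) : ℕ) : ℝ) + 1) ^ 3 ≤ t ^ 2 * (((k : ℝ) + 1) ^ 3) := by
      rw [ht2]
      have h1 : ((((k + d) : ℕ) : ℝ) + 1) ≤ ((d:ℝ) + 1) * ((k:ℝ) + 1) := by
        push_cast
        nlinarith [Nat.cast_nonneg (α := ℝ) k, Nat.cast_nonneg (α := ℝ) d]
      calc ((((k + d) : ℕ) : ℝ) + 1) ^ 3 ≤ (((d:ℝ) + 1) * ((k:ℝ) + 1)) ^ 3 := by
            apply pow_le_pow_left₀ (by positivity) h1
        _ = ((d:ℝ) + 1) ^ 3 * ((k:ℝ) + 1) ^ 3 := by ring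
    exact stmt15_aux1 Cp t _ _ _ _ _ (hu k) (hu (k + d)) (by positivity) (by positivity)
      ht hCp0 hBA (hδ k).2
  -- summability facts
  have hsum' : Summable (fun k => g (k + d)) :=
    hsum.comp_injective (add_left_injective d)
  have hωnn : ∀ k, 0 ≤ ω k * u k ^ 2 := fun k =>
    mul_nonneg (le_trans (by positivity) (hω k).1) (sq_nonneg _)
  have hσnn : ∀ k, 0 ≤ σ k * u k ^ 2 := fun k =>
    mul_nonneg (le_trans (by positivity) (hσ k).1) (sq_nonneg _)
  have hδnn : ∀ k, 0 ≤ δ k * u k * u (k + d) := fun k =>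
    mul_nonneg (mul_nonneg (le_trans (by positivity) (hδ k).1) (hu k)) (hu (k + d))
  have hub : ∀ (f : ℕ → ℝ), (∀ k : ℕ, f k ≤ Cp / ((k:ℝ)+1)^3) → ∀ k : ℕ, f k * u k ^ 2 ≤ Cp * g k := by
    intro f hf k
    have := mul_le_mul_of_nonneg_right (hf k) (sq_nonneg (u k))
    calc f k * u k ^ 2 ≤ Cp / ((k:ℝ)+1)^3 * u k ^ 2 := this
      _ = Cp * g k := by rw [hg]; ring
  have hlb : ∀ (f : ℕ → ℝ), (∀ k : ℕ, Cm / ((k:ℝ)+1)^3 ≤ f k) → ∀ k : ℕ, Cm * g k ≤ f k * u k ^ 2 := by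
    intro f hf k
    have := mul_le_mul_of_nonneg_right (hf k) (sq_nonneg (u k))
    calc Cm * g k = Cm / ((k:ℝ)+1)^3 * u k ^ 2 := by rw [hg]; ring
      _ ≤ f k * u k ^ 2 := this
  have hSω : Summable (fun k => ω k * u k ^ 2) :=
    Summable.of_nonneg_of_le hωnn (hub ω (fun k => (hω k).2)) (hsum.mul_left Cp)
  have hSσ : Summable (fun k => σ k * u k ^ 2) :=
    Summable.of_nonneg_of_le hσnn (hub σ (fun k => (hσ k).2)) (hsum.mul_left Cp)
  have hSmaj : Summable (fun k => Cp * t / 2 * (g k + g (k + d))) :=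
    ((hsum.add hsum').mul_left _)
  have hSδ : Summable (fun k => δ k * u k * u (k + d)) :=
    Summable.of_nonneg_of_le hδnn hkey hSmaj
  set S := ∑' k, g k with hS
  have hS' : ∑' k, g (k + d) ≤ S :=
    tsum_comp_le_tsum_of_inj hsum hgnn (add_left_injective d)
  have hω_lb : Cm * S ≤ ∑' k, ω k * u k ^ 2 := by
    rw [hS, ← tsum_mul_left]
    exact Summable.tsum_le_tsum (hlb ω (fun k => (hω k).1)) (hsum.mul_left Cm) hSω
  have hσ_lb : Cm * S ≤ ∑' k, σ k * u k ^ 2 := by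
    rw [hS, ← tsum_mul_left]
    exact Summable.tsum_le_tsum (hlb σ (fun k => (hσ k).1)) (hsum.mul_left Cm) hSσ
  have hδ_ub : ∑' k, δ k * u k * u (k + d) ≤ Cp * t * S := by
    calc ∑' k, δ k * u k * u (k + d) ≤ ∑' k, Cp * t / 2 * (g k + g (k + d)) :=
          Summable.tsum_le_tsum hkey hSδ hSmaj
      _ = Cp * t / 2 * (S + ∑' k, g (k + d)) := by
          rw [tsum_mul_left, Summable.tsum_add hsum hsum']
      _ ≤ Cp * t / 2 * (S + S) := by
          apply mul_le_mul_of_nonneg_left (by linarith) (by positivity)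
      _ = Cp * t * S := by ring
  have hSnn : 0 ≤ S := tsum_nonneg hgnn
  have hmain : a ^ 2 * ∑' k, ω k * u k ^ 2 - 2 * a * ∑' k, δ k * u k * u (k + d)
      + ∑' k, σ k * u k ^ 2 ≥ (Cm * S) * (a ^ 2 - 2 * a * Cp * t / Cm + 1) := by
    have h1 := mul_le_mul_of_nonneg_left hω_lb (sq_nonneg a)
    have h2 := mul_le_mul_of_nonneg_left hδ_ub (by linarith : (0:ℝ) ≤ 2 * a)
    have heq := fun s => stmt15_aux2 Cm Cp t a s hCm.ne'
    rw [heq S]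
    linarith
  constructor
  · exact hmain
  · rintro hpos ⟨k₀, hk₀⟩
    have hgk : 0 < g k₀ := div_pos (pow_pos ((hu k₀).lt_of_ne' hk₀) 2) (by positivity)
    have hSpos : 0 < S := Summable.tsum_pos hsum hgnn k₀ hgk
    have : 0 < (Cm * S) * (a ^ 2 - 2 * a * Cp * t / Cm + 1) :=
      mul_pos (mul_pos hCm hSpos) hpos
    linarith
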